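/- Let X be a scheme, and let D and E be effective Cartier divisors on X. Then the scheme-theoretic intersection D ×_X E is an effective Cartier divisor on X if and only if there exist effective Cartier divisors D', E', F on X with D = D' + F, E = E' + F, and the supports |D'| and |E'| disjoint. Moreover, when these conditions hold, D', E', F are uniquely determined by D and E. -/

import Mathlib

/-- An ideal of `A` is the ideal of an effective Cartier divisor (on `Spec A`, the
affine-local model of a scheme) when it is generated by a single nonzerodivisor. -/
def IsEffectiveCartier {A : Type*} [CommRing A] (I : Ideal A) : Prop :=
  ∃ a ∈ nonZeroDivisors A, I = Ideal.span {a}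

lemma ec_cancel_le {A : Type*} [CommRing A] {f : A} (hf : f ∈ nonZeroDivisors A)
    {I J : Ideal A} (h : I * Ideal.span {f} ≤ J * Ideal.span {f}) : I ≤ J := by
  intro x hx
  have hx' : x * f ∈ J * Ideal.span {f} :=
    h (Ideal.mul_mem_mul hx (Ideal.mem_span_singleton_self f))
  rw [mul_comm, Ideal.mem_span_singleton_mul] at hx'
  obtain ⟨y, hy, hyx⟩ := hx'
  have : (y - x) * f = 0 := by ring_nf; rw [mul_comm y f, hyx]; ring
  have := mem_nonZeroDivisors_iff_right.mp hf _ this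
  have : y = x := by linear_combination this
  exact this ▸ hy

lemma ec_cancel {A : Type*} [CommRing A] {f : A} (hf : f ∈ nonZeroDivisors A)
    {I J : Ideal A} (h : I * Ideal.span {f} = J * Ideal.span {f}) : I = J :=
  le_antisymm (ec_cancel_le hf h.le) (ec_cancel_le hf h.ge)

theorem isEffectiveCartier_inter_iff_and_unique
    {A : Type*} [CommRing A] {I J : Ideal A}
    (hI : IsEffectiveCartier I) (hJ : IsEffectiveCartier J) :
    (IsEffectiveCartier (I + J) ↔
      ∃ I' J' F : Ideal A, IsEffectiveCartier I' ∧ IsEffectiveCartier J' ∧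
        IsEffectiveCartier F ∧ I = I' * F ∧ J = J' * F ∧ I' + J' = ⊤) ∧
    (∀ I₁ J₁ F₁ I₂ J₂ F₂ : Ideal A,
      (IsEffectiveCartier I₁ ∧ IsEffectiveCartier J₁ ∧ IsEffectiveCartier F₁ ∧
        I = I₁ * F₁ ∧ J = J₁ * F₁ ∧ I₁ + J₁ = ⊤) →
      (IsEffectiveCartier I₂ ∧ IsEffectiveCartier J₂ ∧ IsEffectiveCartier F₂ ∧
        I = I₂ * F₂ ∧ J = J₂ * F₂ ∧ I₂ + J₂ = ⊤) →
      I₁ = I₂ ∧ J₁ = J₂ ∧ F₁ = F₂) := by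
  obtain ⟨a, ha, rfl⟩ := hI
  obtain ⟨b, hb, rfl⟩ := hJ
  constructor
  · constructor
    · rintro ⟨c, hc, hIJ⟩
      have haI : a ∈ Ideal.span {c} := by
        rw [← hIJ]; exact Ideal.mem_sup_left (Ideal.mem_span_singleton_self a)
      have hbJ : b ∈ Ideal.span {c} := by
        rw [← hIJ]; exact Ideal.mem_sup_right (Ideal.mem_span_singleton_self b)
      obtain ⟨a', ha'⟩ := Ideal.mem_span_singleton.mp haI
      obtain ⟨b', hb'⟩ := Ideal.mem_span_singleton.mp hbJ
      have hcmem : c ∈ Ideal.span {a} ⊔ Ideal.span {b} := by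
        rw [← Ideal.add_eq_sup, hIJ]; exact Ideal.mem_span_singleton_self c
      obtain ⟨y, hy, z, hz, hyz⟩ := Submodule.mem_sup.mp hcmem
      obtain ⟨x, rfl⟩ := Ideal.mem_span_singleton.mp hy
      obtain ⟨w, rfl⟩ := Ideal.mem_span_singleton.mp hz
      have hone : a' * x + b' * w = 1 := by
        have h0 : (a' * x + b' * w - 1) * c = 0 := by
          have := hyz
          rw [ha', hb'] at this
          linear_combination this
        have := mem_nonZeroDivisors_iff_right.mp hc _ h0
        linear_combination this
      have ha'nz : a' ∈ nonZeroDivisors A := by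
        rw [mem_nonZeroDivisors_iff_right]; intro t ht
        apply mem_nonZeroDivisors_iff_right.mp ha
        calc t * a = t * a' * c := by rw [ha']; ring
        _ = 0 := by rw [ht, zero_mul]
      have hb'nz : b' ∈ nonZeroDivisors A := by
        rw [mem_nonZeroDivisors_iff_right]; intro t ht
        apply mem_nonZeroDivisors_iff_right.mp hb
        calc t * b = t * b' * c := by rw [hb']; ring
        _ = 0 := by rw [ht, zero_mul]
      refine ⟨Ideal.span {a'}, Ideal.span {b'}, Ideal.span {c},
        ⟨a', ha'nz, rfl⟩, ⟨b', hb'nz, rfl⟩, ⟨c, hc, rfl⟩, ?_, ?_, ?_⟩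
      · rw [Ideal.span_singleton_mul_span_singleton, ha', mul_comm]
      · rw [Ideal.span_singleton_mul_span_singleton, hb', mul_comm]
      · rw [Ideal.eq_top_iff_one, ← hone]
        exact Ideal.add_mem _
          (Ideal.mem_sup_left (Ideal.mul_mem_right _ _ (Ideal.mem_span_singleton_self a')))
          (Ideal.mem_sup_right (Ideal.mul_mem_right _ _ (Ideal.mem_span_singleton_self b')))
    · rintro ⟨I', J', F, _, _, ⟨f, hf, rfl⟩, hI', hJ', htop⟩
      exact ⟨f, hf, by rw [hI', hJ', ← add_mul, htop, Ideal.top_mul]⟩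
  · rintro I₁ J₁ F₁ I₂ J₂ F₂ ⟨_, _, ⟨f₁, hf₁, rfl⟩, hI1, hJ1, ht1⟩
      ⟨_, _, ⟨f₂, hf₂, rfl⟩, hI2, hJ2, ht2⟩
    have hF1 : Ideal.span {a} + Ideal.span {b} = Ideal.span {f₁} := by
      rw [hI1, hJ1, ← add_mul, ht1, Ideal.top_mul]
    have hF2 : Ideal.span {a} + Ideal.span {b} = Ideal.span {f₂} := by
      rw [hI2, hJ2, ← add_mul, ht2, Ideal.top_mul]
    have hFF : Ideal.span (α := A) {f₁} = Ideal.span {f₂} := hF1 ▸ hF2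
    refine ⟨ec_cancel hf₁ ?_, ec_cancel hf₁ ?_, hFF⟩
    · rw [← hI1, hFF, ← hI2]
    · rw [← hJ1, hFF, ← hJ2]
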